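/- Let X and Y be locally compact Hausdorff spaces, let E and F be real Banach spaces with F strictly convex, and let T : C₀(X,E) → C₀(Y,F) be a linear isometry. Let x ∈ X, e ∈ E, and let f ∈ C₀(X,E) satisfy f(x) = e and ‖f‖ = ‖e‖. Then sup{‖Tf(y)‖ : y ∈ Q_x} = ‖e‖. -/

import Mathlib

open ZeroAtInfty

variable {X Y E F : Type*}
  [TopologicalSpace X] [LocallyCompactSpace X] [T2Space X]
  [TopologicalSpace Y] [LocallyCompactSpace Y] [T2Space Y]
  [NormedAddCommGroup E] [NormedSpace ℝ E] [CompleteSpace E]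
  [NormedAddCommGroup F] [NormedSpace ℝ F] [CompleteSpace F]

/-- `S_{x,ν} = {f ∈ C₀(X,E) : ν(f(x)) = ‖f‖ = 1}`. -/
def Sset (x : X) (ν : E →L[ℝ] ℝ) : Set C₀(X, E) :=
  {f | ν (f x) = 1 ∧ ‖f‖ = 1}

/-- `R_{y,μ} = {g ∈ C₀(Y,F) : μ(g(y)) = ‖g‖ = 1}`. -/
def Rset (y : Y) (μ : F →L[ℝ] ℝ) : Set C₀(Y, F) :=
  {g | μ (g y) = 1 ∧ ‖g‖ = 1}

/-- `Q_{x,ν}`: the set of `y ∈ Y` such that `T(S_{x,ν}) ⊆ R_{y,μ}` for some `μ` in the unit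
sphere of `F*`, when `S_{x,ν} ≠ ∅`; empty otherwise. -/
def Qnu (T : C₀(X, E) →ₗᵢ[ℝ] C₀(Y, F)) (x : X) (ν : E →L[ℝ] ℝ) : Set Y :=
  {y | (Sset x ν).Nonempty ∧
    ∃ μ : F →L[ℝ] ℝ, ‖μ‖ = 1 ∧ ∀ f ∈ Sset x ν, T f ∈ Rset y μ}

/-- `Q_x = ⋃_{ν ∈ S_{E*}} Q_{x,ν}`. -/
def Qset (T : C₀(X, E) →ₗᵢ[ℝ] C₀(Y, F)) (x : X) : Set Y :=
  ⋃ ν ∈ {ν : E →L[ℝ] ℝ | ‖ν‖ = 1}, Qnu T x ν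

section Aux

open Filter Topology ZeroAtInftyContinuousMap

/-- Pointwise norm bound for `C₀` functions. -/
lemma C0.norm_apply_le {α β : Type*} [TopologicalSpace α] [SeminormedAddCommGroup β]
    (g : C₀(α, β)) (a : α) : ‖g a‖ ≤ ‖g‖ := by
  rw [← ZeroAtInftyContinuousMap.norm_toBCF_eq_norm]
  exact g.toBCF.norm_coe_le_norm a

lemma C0.norm_le_of_forall {α β : Type*} [TopologicalSpace α] [SeminormedAddCommGroup β]
    (g : C₀(α, β)) {C : ℝ} (hC : 0 ≤ C) (h : ∀ a, ‖g a‖ ≤ C) : ‖g‖ ≤ C := by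
  rw [← ZeroAtInftyContinuousMap.norm_toBCF_eq_norm]
  exact (BoundedContinuousFunction.norm_le hC).2 h

/-- A nonzero `C₀` function attains its norm. -/
lemma C0.exists_norm_eq {α β : Type*} [TopologicalSpace α] [SeminormedAddCommGroup β]
    (g : C₀(α, β)) (hg : 0 < ‖g‖) : ∃ a, ‖g a‖ = ‖g‖ := by
  have hmem : g ⁻¹' Metric.ball 0 (‖g‖ / 2) ∈ Filter.cocompact α :=
    (zero_at_infty g) (Metric.ball_mem_nhds 0 (half_pos hg))
  obtain ⟨K, hK, hKs⟩ := Filter.mem_cocompact.mp hmem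
  set A : Set α := {a | ‖g‖ / 2 ≤ ‖g a‖} with hA
  have hAclosed : IsClosed A :=
    isClosed_le continuous_const ((map_continuous g).norm)
  have hAK : A ⊆ K := by
    intro a ha
    by_contra haK
    have : g a ∈ Metric.ball 0 (‖g‖ / 2) := hKs haK
    rw [Metric.mem_ball, dist_zero_right] at this
    exact absurd (ha : ‖g‖ / 2 ≤ ‖g a‖) (not_le.mpr this)
  have hAcomp : IsCompact A := hK.of_isClosed_subset hAclosed hAK
  have hAne : A.Nonempty := by
    by_contra hne
    have : ∀ a, ‖g a‖ ≤ ‖g‖ / 2 := by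
      intro a
      by_contra hlt
      exact hne ⟨a, le_of_lt (not_le.mp hlt)⟩
    have := C0.norm_le_of_forall g (by linarith) this
    linarith
  obtain ⟨a, haA, hamax⟩ := hAcomp.exists_isMaxOn hAne
    ((map_continuous g).norm.continuousOn)
  refine ⟨a, le_antisymm (C0.norm_apply_le g a) ?_⟩
  refine C0.norm_le_of_forall g (norm_nonneg _) fun b => ?_
  by_cases hb : b ∈ A
  · exact hamax hb
  · have : ‖g b‖ < ‖g‖ / 2 := not_le.mp hb
    exact le_trans this.le (le_trans haA (le_refl _))

/-- The set where a `C₀` function has norm at least `1` is compact. -/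
lemma C0.isCompact_norm_ge {α β : Type*} [TopologicalSpace α] [SeminormedAddCommGroup β]
    (g : C₀(α, β)) : IsCompact {a | 1 ≤ ‖g a‖} := by
  have hmem : g ⁻¹' Metric.ball 0 1 ∈ Filter.cocompact α :=
    (zero_at_infty g) (Metric.ball_mem_nhds 0 one_pos)
  obtain ⟨K, hK, hKs⟩ := Filter.mem_cocompact.mp hmem
  have hclosed : IsClosed {a | 1 ≤ ‖g a‖} :=
    isClosed_le continuous_const ((map_continuous g).norm)
  refine hK.of_isClosed_subset hclosed fun a ha => ?_
  by_contra haK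
  have : g a ∈ Metric.ball 0 1 := hKs haK
  rw [Metric.mem_ball, dist_zero_right] at this
  exact absurd (ha : (1:ℝ) ≤ ‖g a‖) (not_le.mpr this)

lemma C0.sum_apply {α β : Type*} [TopologicalSpace α] [SeminormedAddCommGroup β]
    {ι : Type*} (t : Finset ι) (g : ι → C₀(α, β)) (a : α) :
    (∑ i ∈ t, g i) a = ∑ i ∈ t, g i a := by
  classical
  induction t using Finset.induction with
  | empty => simp
  | insert _ _ h ih =>
    rw [Finset.sum_insert h, Finset.sum_insert h, ZeroAtInftyContinuousMap.add_apply, ih]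

/-- Any element of `Sset x ν` with `‖ν‖ = 1` has at least norm `ν (w x)`. -/
lemma lower_norm_bound {x : X} {ν : E →L[ℝ] ℝ} (hν : ‖ν‖ = 1) (w : C₀(X, E)) :
    ν (w x) ≤ ‖w‖ := by
  calc ν (w x) ≤ ‖ν (w x)‖ := le_abs_self _
    _ ≤ ‖ν‖ * ‖w x‖ := ν.le_opNorm _
    _ = ‖w x‖ := by rw [hν, one_mul]
    _ ≤ ‖w‖ := C0.norm_apply_le w x

/-- Averages of finitely many elements of `Sset x ν` remain in `Sset x ν`. -/
lemma avg_mem_Sset {x : X} {ν : E →L[ℝ] ℝ} (hν : ‖ν‖ = 1)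
    (t : Finset C₀(X, E)) (htne : t.Nonempty) (hts : ↑t ⊆ Sset x ν) :
    ((t.card : ℝ)⁻¹ • ∑ g ∈ t, g) ∈ Sset x ν := by
  have hcard : (0:ℝ) < t.card := by exact_mod_cast htne.card_pos
  set h : C₀(X, E) := (t.card : ℝ)⁻¹ • ∑ g ∈ t, g with hh
  have hhx : ν (h x) = 1 := by
    rw [hh, ZeroAtInftyContinuousMap.smul_apply, map_smul, smul_eq_mul,
      C0.sum_apply, map_sum]
    rw [Finset.sum_congr rfl fun g hg => (hts hg).1]
    simp [inv_mul_cancel₀ (ne_of_gt hcard)]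
  refine ⟨hhx, le_antisymm ?_ ?_⟩
  · rw [hh, norm_smul]
    have : ‖∑ g ∈ t, g‖ ≤ (t.card : ℝ) := by
      calc ‖∑ g ∈ t, g‖ ≤ ∑ g ∈ t, ‖g‖ := norm_sum_le _ _
        _ = ∑ g ∈ t, 1 := Finset.sum_congr rfl fun g hg => (hts hg).2
        _ = (t.card : ℝ) := by simp
    calc ‖(t.card : ℝ)⁻¹‖ * ‖∑ g ∈ t, g‖ ≤ (t.card : ℝ)⁻¹ * (t.card : ℝ) := by
          rw [Real.norm_eq_abs, abs_of_pos (inv_pos.mpr hcard)]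
          exact mul_le_mul_of_nonneg_left this (le_of_lt (inv_pos.mpr hcard))
      _ = 1 := inv_mul_cancel₀ (ne_of_gt hcard)
  · rw [← hhx]; exact lower_norm_bound hν h

/-- Key lemma: if `e ≠ 0` there is `y ∈ Qset T x` where `‖T f y‖ = ‖e‖`. -/
lemma exists_mem_Qset [StrictConvexSpace ℝ F]
    (T : C₀(X, E) →ₗᵢ[ℝ] C₀(Y, F)) (x : X) (e : E) (f : C₀(X, E))
    (hfx : f x = e) (hf : ‖f‖ = ‖e‖) (he : e ≠ 0) :
    ∃ y ∈ Qset T x, ‖T f y‖ = ‖e‖ := by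
  classical
  have hne : ‖e‖ ≠ 0 := norm_ne_zero_iff.mpr he
  obtain ⟨ν, hν1, hνe⟩ := exists_dual_vector ℝ e hne
  set g₀ : C₀(X, E) := ‖e‖⁻¹ • f with hg₀
  have hg₀S : g₀ ∈ Sset x ν := by
    constructor
    · rw [hg₀, ZeroAtInftyContinuousMap.smul_apply, map_smul, smul_eq_mul, hfx, hνe]
      exact inv_mul_cancel₀ hne
    · rw [hg₀, norm_smul, hf, Real.norm_eq_abs, abs_of_pos
        (inv_pos.mpr (lt_of_le_of_ne (norm_nonneg e) (Ne.symm hne)))]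
      exact inv_mul_cancel₀ hne
  -- norm-one facts for images
  have hTnorm : ∀ g ∈ Sset x ν, ‖T g‖ = 1 := fun g hg => by
    rw [T.norm_map]; exact hg.2
  have hTle : ∀ g ∈ Sset x ν, ∀ y, ‖T g y‖ ≤ 1 := fun g hg y => by
    calc ‖T g y‖ ≤ ‖T g‖ := C0.norm_apply_le _ y
      _ = 1 := hTnorm g hg
  -- finite intersection property
  have hfip : ∀ t : Finset C₀(X, E), t.Nonempty → ↑t ⊆ Sset x ν →
      ∃ y : Y, ∀ g ∈ t, 1 ≤ ‖T g y‖ := by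
    intro t htne hts
    have hcard : (0:ℝ) < t.card := by exact_mod_cast htne.card_pos
    set h : C₀(X, E) := (t.card : ℝ)⁻¹ • ∑ g ∈ t, g with hh
    have hhS : h ∈ Sset x ν := avg_mem_Sset hν1 t htne hts
    have hThnorm : ‖T h‖ = 1 := hTnorm h hhS
    obtain ⟨y, hy⟩ := C0.exists_norm_eq (T h) (by rw [hThnorm]; exact one_pos)
    rw [hThnorm] at hy
    -- ∑ ‖T g y‖ ≥ card
    have hTh : (T h) y = (t.card : ℝ)⁻¹ • ∑ g ∈ t, (T g) y := by
      rw [hh, map_smul, map_sum, ZeroAtInftyContinuousMap.smul_apply, C0.sum_apply]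
    have hsum : (t.card : ℝ) ≤ ∑ g ∈ t, ‖T g y‖ := by
      have h1 : ‖∑ g ∈ t, (T g) y‖ = (t.card : ℝ) := by
        have := hy
        rw [hTh, norm_smul, Real.norm_eq_abs, abs_of_pos (inv_pos.mpr hcard)] at this
        field_simp at this ⊢
        linarith [this]
      calc (t.card : ℝ) = ‖∑ g ∈ t, (T g) y‖ := h1.symm
        _ ≤ ∑ g ∈ t, ‖T g y‖ := norm_sum_le _ _
    refine ⟨y, fun g₁ hg₁ => ?_⟩
    by_contra hlt
    push_neg at hlt
    have hrest : ∑ g ∈ t.erase g₁, ‖T g y‖ ≤ ((t.erase g₁).card : ℝ) := by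
      calc ∑ g ∈ t.erase g₁, ‖T g y‖ ≤ ∑ g ∈ t.erase g₁, 1 :=
            Finset.sum_le_sum fun g hg => hTle g (hts (Finset.mem_of_mem_erase hg)) y
        _ = ((t.erase g₁).card : ℝ) := by simp
    have hsplit : ∑ g ∈ t, ‖T g y‖ = ‖T g₁ y‖ + ∑ g ∈ t.erase g₁, ‖T g y‖ :=
      (Finset.add_sum_erase t _ hg₁).symm
    have hcard' : ((t.erase g₁).card : ℝ) = (t.card : ℝ) - 1 := by
      rw [Finset.card_erase_of_mem hg₁]
      have : 1 ≤ t.card := htne.card_pos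
      push_cast [Nat.cast_sub this]
      ring
    rw [hsplit] at hsum
    rw [hcard'] at hrest
    linarith
  -- apply compactness
  set Z : C₀(X, E) → Set Y := fun g => {y | 1 ≤ ‖T g y‖} with hZ
  have hZclosed : ∀ g, IsClosed (Z g) :=
    fun g => isClosed_le continuous_const ((map_continuous (T g)).norm)
  have hZcomp : IsCompact (Z g₀) := C0.isCompact_norm_ge (T g₀)
  have hmain : (Z g₀ ∩ ⋂ g : Sset x ν, Z g.1).Nonempty := by
    refine hZcomp.inter_iInter_nonempty (fun g : Sset x ν => Z g.1)
      (fun g => hZclosed g.1) fun u => ?_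
    set t : Finset C₀(X, E) := insert g₀ (u.image Subtype.val) with ht
    have htne : t.Nonempty := ⟨g₀, Finset.mem_insert_self _ _⟩
    have hts : ↑t ⊆ Sset x ν := by
      intro g hg
      simp only [ht, Finset.coe_insert, Set.mem_insert_iff, Finset.coe_image,
        Set.mem_image] at hg
      rcases hg with rfl | ⟨i, _, rfl⟩
      · exact hg₀S
      · exact i.2
    obtain ⟨y, hy⟩ := hfip t htne hts
    refine ⟨y, ⟨hy g₀ (Finset.mem_insert_self _ _), ?_⟩⟩
    simp only [Set.mem_iInter]
    intro i hi
    exact hy i.1 (Finset.mem_insert_of_mem (Finset.mem_image_of_mem _ hi))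
  obtain ⟨y, hyg₀, hyall⟩ := hmain
  have hyS : ∀ g ∈ Sset x ν, 1 ≤ ‖T g y‖ := by
    intro g hg
    have := Set.mem_iInter.mp hyall ⟨g, hg⟩
    exact this
  have hyeq : ∀ g ∈ Sset x ν, ‖T g y‖ = 1 :=
    fun g hg => le_antisymm (hTle g hg y) (hyS g hg)
  -- all values at y coincide
  set u : F := T g₀ y with hu
  have hunorm : ‖u‖ = 1 := hyeq g₀ hg₀S
  have hvals : ∀ g ∈ Sset x ν, T g y = u := by
    intro g hg
    set h : C₀(X, E) := (2:ℝ)⁻¹ • (g + g₀) with hh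
    have hhS : h ∈ Sset x ν := by
      constructor
      · rw [hh, ZeroAtInftyContinuousMap.smul_apply, map_smul, smul_eq_mul,
          ZeroAtInftyContinuousMap.add_apply, map_add, hg.1, hg₀S.1]
        norm_num
      · refine le_antisymm ?_ ?_
        · rw [hh, norm_smul, Real.norm_eq_abs]
          have : ‖g + g₀‖ ≤ 2 := by
            calc ‖g + g₀‖ ≤ ‖g‖ + ‖g₀‖ := norm_add_le _ _
              _ = 2 := by rw [hg.2, hg₀S.2]; norm_num
          rw [abs_of_pos (by norm_num : (0:ℝ) < (2:ℝ)⁻¹)]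
          linarith
        · have h1 : ν (h x) = 1 := by
            rw [hh, ZeroAtInftyContinuousMap.smul_apply, map_smul, smul_eq_mul,
              ZeroAtInftyContinuousMap.add_apply, map_add, hg.1, hg₀S.1]
            norm_num
          rw [← h1]; exact lower_norm_bound hν1 h
    have h2 : ‖T g y + T g₀ y‖ = 2 := by
      have hle : ‖T g y + T g₀ y‖ ≤ 2 := by
        calc ‖T g y + T g₀ y‖ ≤ ‖T g y‖ + ‖T g₀ y‖ := norm_add_le _ _
          _ = 2 := by rw [hyeq g hg, hyeq g₀ hg₀S]; norm_num
      have hge : 2 ≤ ‖T g y + T g₀ y‖ := by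
        have := hyS h hhS
        have hTh : (T h) y = (2:ℝ)⁻¹ • (T g y + T g₀ y) := by
          rw [hh, map_smul, map_add, ZeroAtInftyContinuousMap.smul_apply,
            ZeroAtInftyContinuousMap.add_apply]
        rw [hTh, norm_smul, Real.norm_eq_abs, abs_of_pos
          (by norm_num : (0:ℝ) < (2:ℝ)⁻¹)] at this
        linarith
      linarith
    have := eq_of_norm_eq_of_norm_add_eq (x := T g y) (y := T g₀ y)
      (by rw [hyeq g hg, hyeq g₀ hg₀S]) (by rw [h2, hyeq g hg, hyeq g₀ hg₀S]; norm_num)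
    rw [this]
  have hune : u ≠ 0 := by
    intro h0
    rw [h0, norm_zero] at hunorm
    norm_num at hunorm
  obtain ⟨μ, hμ1, hμu⟩ := exists_dual_vector ℝ u (norm_ne_zero_iff.mpr hune)
  have hyQnu : y ∈ Qnu T x ν := by
    refine ⟨⟨g₀, hg₀S⟩, μ, hμ1, fun g hg => ?_⟩
    refine ⟨?_, hTnorm g hg⟩
    rw [hvals g hg, hμu, hunorm]
    simp
  have hyQ : y ∈ Qset T x := by
    rw [Qset]
    exact Set.mem_biUnion hν1 hyQnu
  refine ⟨y, hyQ, ?_⟩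
  have hfg : f = ‖e‖ • g₀ := by
    rw [hg₀, smul_smul, mul_inv_cancel₀ hne, one_smul]
  rw [hfg, map_smul, ZeroAtInftyContinuousMap.smul_apply, norm_smul,
    Real.norm_eq_abs, abs_of_nonneg (norm_nonneg e), ← hu, hunorm, mul_one]

end Aux

/-- If `f(x) = e` and `‖f‖ = ‖e‖`, then `sup{‖Tf(y)‖ : y ∈ Q_x} = ‖e‖`. -/
theorem sSup_norm_apply_eq [StrictConvexSpace ℝ F]
    (T : C₀(X, E) →ₗᵢ[ℝ] C₀(Y, F)) (x : X) (e : E) (f : C₀(X, E))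
    (hfx : f x = e) (hf : ‖f‖ = ‖e‖) :
    sSup {r : ℝ | ∃ y ∈ Qset T x, r = ‖T f y‖} = ‖e‖ := by
  by_cases he : e = 0
  · subst he
    have hf0 : f = 0 := by
      rw [norm_zero] at hf
      exact norm_eq_zero.mp hf
    have hT0 : T f = 0 := by rw [hf0, map_zero]
    have hsub : {r : ℝ | ∃ y ∈ Qset T x, r = ‖T f y‖} ⊆ {0} := by
      intro r ⟨y, _, hr⟩
      simp [hr, hT0]
    rcases Set.eq_empty_or_nonempty {r : ℝ | ∃ y ∈ Qset T x, r = ‖T f y‖} with hemp | hne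
    · rw [hemp, Real.sSup_empty, norm_zero]
    · have : {r : ℝ | ∃ y ∈ Qset T x, r = ‖T f y‖} = {0} :=
        Set.eq_of_subset_of_subset hsub (by
          rintro r rfl
          obtain ⟨r', hr'⟩ := hne
          have := hsub hr'
          rw [Set.mem_singleton_iff] at this
          rwa [← this])
      rw [this, csSup_singleton, norm_zero]
  · obtain ⟨y, hyQ, hy⟩ := exists_mem_Qset T x e f hfx hf he
    apply IsGreatest.csSup_eq
    constructor
    · exact ⟨y, hyQ, hy.symm⟩
    · rintro r ⟨y', _, rfl⟩
      calc ‖T f y'‖ ≤ ‖T f‖ := C0.norm_apply_le _ y'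
        _ = ‖e‖ := by rw [T.norm_map, hf]
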